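/- In asymmetric atomic deduction modulo a rewrite relation R, a sequent Γ ⊢ Δ has a cut-free proof if and only if Γ contains an atomic proposition A and Δ contains an atomic proposition B such that A and B have a common reduct. -/
import Mathlib


open Relation

/--
Asymmetric atomic deduction modulo a rewrite relation `R` on atomic propositions `α`.
Sequents are pairs of finite multisets of atomic propositions; `→*` is the
reflexive-transitive closure `Relation.ReflTransGen R` of `R`.
The Boolean index records whether the Cut rule is allowed:
`AsymDed R true Γ Δ` is provability in the full system, `AsymDed R false Γ Δ`
is provability by a cut-free proof.
-/
inductive AsymDed (R : α → α → Prop) : Bool → Multiset α → Multiset α → Prop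
  | ax {b : Bool} (Γ Δ : Multiset α) (A₁ A₂ C : α)
      (h₁ : ReflTransGen R A₁ C) (h₂ : ReflTransGen R A₂ C) :
      AsymDed R b (A₁ ::ₘ Γ) (A₂ ::ₘ Δ)
  | cut (Γ Δ : Multiset α) (C C₁ C₂ : α)
      (h₁ : ReflTransGen R C C₁) (h₂ : ReflTransGen R C C₂)
      (p₁ : AsymDed R true Γ (C₁ ::ₘ Δ)) (p₂ : AsymDed R true (C₂ ::ₘ Γ) Δ) :
      AsymDed R true Γ Δ
  | contrL {b : Bool} (Γ Δ : Multiset α) (A A₁ A₂ : α)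
      (h₁ : ReflTransGen R A A₁) (h₂ : ReflTransGen R A A₂)
      (p : AsymDed R b (A₁ ::ₘ A₂ ::ₘ Γ) Δ) :
      AsymDed R b (A ::ₘ Γ) Δ
  | contrR {b : Bool} (Γ Δ : Multiset α) (A A₁ A₂ : α)
      (h₁ : ReflTransGen R A A₁) (h₂ : ReflTransGen R A A₂)
      (p : AsymDed R b Γ (A₁ ::ₘ A₂ ::ₘ Δ)) :
      AsymDed R b Γ (A ::ₘ Δ)
  | weakL {b : Bool} (Γ Δ : Multiset α) (A : α)
      (p : AsymDed R b Γ Δ) :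
      AsymDed R b (A ::ₘ Γ) Δ
  | weakR {b : Bool} (Γ Δ : Multiset α) (A : α)
      (p : AsymDed R b Γ Δ) :
      AsymDed R b Γ (A ::ₘ Δ)

/--
In asymmetric atomic deduction modulo `R`, the sequent `Γ ⊢ Δ` has a cut-free
proof if and only if `Γ` contains a proposition `A` and `Δ` contains a
proposition `B` such that `A` and `B` have a common reduct.
-/
theorem asymDed_cutFree_iff {α : Type*} (R : α → α → Prop) (Γ Δ : Multiset α) :
    AsymDed R false Γ Δ ↔
      ∃ A ∈ Γ, ∃ B ∈ Δ, ∃ C, Relation.ReflTransGen R A C ∧ Relation.ReflTransGen R B C := by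
  constructor
  · intro h
    have key : ∀ (b : Bool) (Γ Δ : Multiset α), AsymDed R b Γ Δ → b = false →
        ∃ A ∈ Γ, ∃ B ∈ Δ, ∃ C, Relation.ReflTransGen R A C ∧ Relation.ReflTransGen R B C := by
      intro b Γ Δ h
      induction h with
      | cut => exact fun h => by simp at h
      | ax Γ Δ A₁ A₂ C h₁ h₂ =>
          exact fun _ => ⟨A₁, Multiset.mem_cons_self _ _, A₂, Multiset.mem_cons_self _ _, C, h₁, h₂⟩
      | contrL Γ Δ A A₁ A₂ h₁ h₂ p ih =>
          intro hb
          obtain ⟨X, hX, B, hB, C, hXC, hBC⟩ := ih hb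
          rw [Multiset.mem_cons] at hX
          rcases hX with rfl | hX
          · exact ⟨A, Multiset.mem_cons_self _ _, B, hB, C, h₁.trans hXC, hBC⟩
          · rw [Multiset.mem_cons] at hX
            rcases hX with rfl | hX
            · exact ⟨A, Multiset.mem_cons_self _ _, B, hB, C, h₂.trans hXC, hBC⟩
            · exact ⟨X, Multiset.mem_cons_of_mem hX, B, hB, C, hXC, hBC⟩
      | contrR Γ Δ A A₁ A₂ h₁ h₂ p ih =>
          intro hb
          obtain ⟨X, hX, B, hB, C, hXC, hBC⟩ := ih hb
          rw [Multiset.mem_cons] at hB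
          rcases hB with rfl | hB
          · exact ⟨X, hX, A, Multiset.mem_cons_self _ _, C, hXC, h₁.trans hBC⟩
          · rw [Multiset.mem_cons] at hB
            rcases hB with rfl | hB
            · exact ⟨X, hX, A, Multiset.mem_cons_self _ _, C, hXC, h₂.trans hBC⟩
            · exact ⟨X, hX, B, Multiset.mem_cons_of_mem hB, C, hXC, hBC⟩
      | weakL Γ Δ A p ih =>
          intro hb
          obtain ⟨X, hX, B, hB, C, hXC, hBC⟩ := ih hb
          exact ⟨X, Multiset.mem_cons_of_mem hX, B, hB, C, hXC, hBC⟩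
      | weakR Γ Δ A p ih =>
          intro hb
          obtain ⟨X, hX, B, hB, C, hXC, hBC⟩ := ih hb
          exact ⟨X, hX, B, Multiset.mem_cons_of_mem hB, C, hXC, hBC⟩
    exact key false Γ Δ h rfl
  · rintro ⟨A, hA, B, hB, C, hAC, hBC⟩
    obtain ⟨Γ', rfl⟩ := Multiset.exists_cons_of_mem hA
    obtain ⟨Δ', rfl⟩ := Multiset.exists_cons_of_mem hB
    exact AsymDed.ax _ _ _ _ C hAC hBC
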